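/- arXiv:2410.01489 — 2 statements merged into one kernel-verified Lean document; each statement's English description precedes it below -/
import Mathlib

section
/- Let (Ω,ρ) be a compact metric space and K : Ω × Ω → [0,∞] a symmetric, extended-continuous, regular kernel. For any Borel probability measure μ with U_K^μ finite on Ω, there exists an increasing sequence of measures (μ_n) with μ_n ≤ μ such that each potential U_K^{μ_n} is continuous on Ω and U_K^{μ_n}(x) → U_K^μ(x) for all x ∈ Ω. -/
open MeasureTheory Metric Set ENNReal Filter Topology

/-- The potential of a measure `μ` with respect to a kernel `K`. -/
noncomputable def pot {Ω : Type*} [MeasurableSpace Ω] (K : Ω → Ω → ℝ≥0∞)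
    (μ : Measure Ω) (x : Ω) : ℝ≥0∞ := ∫⁻ y, K x y ∂μ

/-- The support of a Borel measure. -/
def msupp {Ω : Type*} [TopologicalSpace Ω] [MeasurableSpace Ω] (μ : Measure Ω) : Set Ω :=
  {x | ∀ V : Set Ω, IsOpen V → x ∈ V → 0 < μ V}

/-- `K` is regular: whenever the potential of a finite measure is continuous and finite
on the support of the measure, it is continuous and finite on all of `Ω`. -/
def Regular {Ω : Type*} [TopologicalSpace Ω] [MeasurableSpace Ω] (K : Ω → Ω → ℝ≥0∞) : Prop :=
  ∀ ν : Measure Ω, IsFiniteMeasure ν →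
    ContinuousOn (pot K ν) (msupp ν) → (∀ x ∈ msupp ν, pot K ν x ≠ ⊤) →
    Continuous (pot K ν) ∧ ∀ x, pot K ν x ≠ ⊤

set_option linter.unusedSectionVars false

section Aux

lemma continuousOn_union_closed {X Y : Type*} [TopologicalSpace X] [TopologicalSpace Y]
    {f : X → Y} {s t : Set X} (hs : IsClosed s) (ht : IsClosed t)
    (h1 : ContinuousOn f s) (h2 : ContinuousOn f t) : ContinuousOn f (s ∪ t) := by
  intro x hx
  have hs' : ContinuousWithinAt f s x := by
    by_cases h : x ∈ s
    · exact h1 x h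
    · exact continuousWithinAt_of_notMem_closure (by rwa [hs.closure_eq])
  have ht' : ContinuousWithinAt f t x := by
    by_cases h : x ∈ t
    · exact h2 x h
    · exact continuousWithinAt_of_notMem_closure (by rwa [ht.closure_eq])
  exact hs'.union ht'

lemma iSup_min_natCast (a : ℝ≥0∞) : ⨆ n : ℕ, min a (n : ℝ≥0∞) = a := by
  refine le_antisymm (iSup_le fun n => min_le_left _ _) ?_
  rcases eq_or_ne a ⊤ with h | h
  · subst h
    have : ∀ n : ℕ, min (⊤ : ℝ≥0∞) (n : ℝ≥0∞) = (n : ℝ≥0∞) := fun n => min_eq_right le_top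
    simp only [this]
    exact le_of_eq iSup_natCast.symm
  · obtain ⟨n, hn⟩ := ENNReal.exists_nat_gt h
    calc a = min a (n : ℝ≥0∞) := (min_eq_left hn.le).symm
    _ ≤ ⨆ n : ℕ, min a (n : ℝ≥0∞) := le_iSup (fun n : ℕ => min a (n : ℝ≥0∞)) n

variable {Ω : Type*} [MetricSpace Ω] [CompactSpace Ω] [MeasurableSpace Ω] [BorelSpace Ω]
variable {K : Ω → Ω → ℝ≥0∞}

lemma contKx (hK : Continuous (Function.uncurry K)) (y : Ω) : Continuous fun x => K x y :=
  hK.comp (continuous_id.prodMk continuous_const)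

lemma contKy (hK : Continuous (Function.uncurry K)) (x : Ω) : Continuous fun y => K x y :=
  hK.comp (continuous_const.prodMk continuous_id)

lemma pot_trunc_cont (hK : Continuous (Function.uncurry K)) (ν : Measure Ω) [IsFiniteMeasure ν]
    (n : ℕ) : Continuous fun x => ∫⁻ y, min (K x y) (n : ℝ≥0∞) ∂ν := by
  rw [continuous_iff_seqContinuous]
  intro u x hux
  have := tendsto_lintegral_of_dominated_convergence (μ := ν)
    (F := fun k y => min (K (u k) y) (n : ℝ≥0∞)) (f := fun y => min (K x y) (n : ℝ≥0∞))
    (bound := fun _ => (n : ℝ≥0∞))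
    (fun k => ((contKy hK (u k)).min continuous_const).measurable)
    (fun k => ae_of_all _ fun y => min_le_right _ _)
    (by simp only [lintegral_const]
        exact ENNReal.mul_ne_top (ENNReal.natCast_ne_top n) (measure_ne_top ν univ))
    (ae_of_all _ fun y => (((contKx hK y).min continuous_const).tendsto x).comp hux)
  exact this

lemma pot_eq_iSup_trunc (hK : Continuous (Function.uncurry K)) (ν : Measure Ω) (x : Ω) :
    pot K ν x = ⨆ n : ℕ, ∫⁻ y, min (K x y) (n : ℝ≥0∞) ∂ν := by
  calc pot K ν x = ∫⁻ y, ⨆ n : ℕ, min (K x y) (n : ℝ≥0∞) ∂ν :=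
        lintegral_congr fun y => (iSup_min_natCast _).symm
  _ = ⨆ n : ℕ, ∫⁻ y, min (K x y) (n : ℝ≥0∞) ∂ν :=
        lintegral_iSup (fun n => ((contKy hK x).min continuous_const).measurable)
          (fun i j hij y => min_le_min le_rfl (Nat.cast_le.2 hij))

lemma pot_lsc (hK : Continuous (Function.uncurry K)) (ν : Measure Ω) [IsFiniteMeasure ν] :
    LowerSemicontinuous (pot K ν) := by
  have h : pot K ν = fun x => ⨆ n : ℕ, ∫⁻ y, min (K x y) (n : ℝ≥0∞) ∂ν :=
    funext fun x => pot_eq_iSup_trunc hK ν x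
  rw [h]
  exact lowerSemicontinuous_iSup fun n => (pot_trunc_cont hK ν n).lowerSemicontinuous

lemma pot_mono {ν₁ ν₂ : Measure Ω} (h : ν₁ ≤ ν₂) (x : Ω) : pot K ν₁ x ≤ pot K ν₂ x :=
  lintegral_mono' h le_rfl

lemma msupp_restrict_closed {D : Set Ω} (hD : IsClosed D) (ν : Measure Ω) :
    msupp (ν.restrict D) ⊆ D := by
  intro x hx
  by_contra hxD
  have h0 := hx Dᶜ hD.isOpen_compl hxD
  rw [Measure.restrict_apply' hD.measurableSet, compl_inter_self, measure_empty] at h0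
  exact lt_irrefl 0 h0

lemma lsc_eventually_le {f : Ω → ℝ≥0∞} (hf : LowerSemicontinuous f) (x : Ω) (hfx : f x ≠ ⊤)
    {ε : ℝ≥0∞} (hε : 0 < ε) : ∀ᶠ x' in 𝓝 x, f x - ε ≤ f x' := by
  rcases le_or_gt (f x) ε with h | h
  · filter_upwards with y
    simp [tsub_eq_zero_of_le h]
  · have hlt : f x - ε < f x :=
      ENNReal.sub_lt_self hfx (pos_of_gt h).ne' hε.ne'
    filter_upwards [hf x (f x - ε) hlt] with y hy using hy.le

lemma pot_restrict_continuousOn (hK : Continuous (Function.uncurry K)) (μ : Measure Ω)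
    [IsFiniteMeasure μ] (hfin : ∀ x, pot K μ x ≠ ⊤) {D : Set Ω} (hD : IsClosed D)
    (hcont : ContinuousOn (pot K μ) D) :
    ContinuousOn (pot K (μ.restrict D)) D := by
  have hDm := hD.measurableSet
  set ν := μ.restrict D with hν
  set ν' := μ.restrict Dᶜ with hν'
  have hsum : ∀ x, pot K ν x + pot K ν' x = pot K μ x := by
    intro x
    rw [pot, pot, pot, ← lintegral_add_measure, Measure.restrict_add_restrict_compl hDm]
  have hν_fin : ∀ x, pot K ν x ≠ ⊤ := fun x =>
    ne_top_of_le_ne_top (hfin x) ((le_add_right le_rfl).trans (hsum x).le)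
  have hν'_fin : ∀ x, pot K ν' x ≠ ⊤ := fun x =>
    ne_top_of_le_ne_top (hfin x) ((le_add_left le_rfl).trans (hsum x).le)
  intro x hx
  rw [ContinuousWithinAt, ENNReal.tendsto_nhds (hν_fin x)]
  intro ε hε
  have hε2 : (0 : ℝ≥0∞) < ε / 2 := ENNReal.half_pos hε.ne'
  have hlower : ∀ᶠ x' in 𝓝[D] x, pot K ν x - ε ≤ pot K ν x' :=
    (lsc_eventually_le (pot_lsc hK ν) x (hν_fin x) hε).filter_mono nhdsWithin_le_nhds
  have hupper : ∀ᶠ x' in 𝓝[D] x, pot K ν x' ≤ pot K ν x + ε := by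
    have hμcont : ContinuousWithinAt (pot K μ) D x := hcont x hx
    have hlt : pot K μ x < pot K μ x + ε / 2 :=
      ENNReal.lt_add_right (hfin x) hε2.ne'
    have h1 : ∀ᶠ x' in 𝓝[D] x, pot K μ x' < pot K μ x + ε / 2 :=
      hμcont.eventually_lt_const hlt
    have h2 : ∀ᶠ x' in 𝓝[D] x, pot K ν' x - ε / 2 ≤ pot K ν' x' :=
      (lsc_eventually_le (pot_lsc hK ν') x (hν'_fin x) hε2).filter_mono nhdsWithin_le_nhds
    filter_upwards [h1, h2] with x' h1' h2'
    have hq_fin : pot K ν' x' ≠ ⊤ := hν'_fin x'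
    have key : pot K ν x' = (pot K ν x' + pot K ν' x') - pot K ν' x' :=
      (ENNReal.add_sub_cancel_right hq_fin).symm
    rw [key, hsum x']
    calc pot K μ x' - pot K ν' x' ≤ (pot K μ x + ε / 2) - (pot K ν' x - ε / 2) :=
          tsub_le_tsub h1'.le h2'
    _ ≤ pot K ν x + ε := by
        rw [← hsum x]
        set a := pot K ν x with ha
        set b := pot K ν' x with hb0
        have hstep : a + b + ε / 2 ≤ (a + ε) + (b - ε / 2) := by
          have hb : b ≤ (b - ε / 2) + ε / 2 := le_tsub_add
          calc a + b + ε / 2 ≤ a + ((b - ε / 2) + ε / 2) + ε / 2 := by gcongr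
          _ = (a + (ε / 2 + ε / 2)) + (b - ε / 2) := by ring
          _ = (a + ε) + (b - ε / 2) := by rw [ENNReal.add_halves]
        calc (a + b) + ε / 2 - (b - ε / 2) ≤ ((a + ε) + (b - ε / 2)) - (b - ε / 2) :=
              tsub_le_tsub hstep le_rfl
        _ = a + ε := ENNReal.add_sub_cancel_right (ENNReal.sub_ne_top (hν'_fin x))
  filter_upwards [hlower, hupper] with x' h1 h2 using ⟨h1, h2⟩

lemma lusin_pot (hK : Continuous (Function.uncurry K)) (μ : Measure Ω)
    [IsFiniteMeasure μ] (hfin : ∀ x, pot K μ x ≠ ⊤) {ε : ℝ} (hε : 0 < ε) :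
    ∃ C : Set Ω, IsCompact C ∧ IsClosed C ∧ MeasurableSet C ∧
      μ Cᶜ ≤ 2 * ENNReal.ofReal ε ∧ ContinuousOn (pot K μ) C := by
  set g : Ω → ℝ := fun x => (pot K μ x).toReal with hg
  set f : ℕ → Ω → ℝ := fun n x => (∫⁻ y, min (K x y) (n : ℝ≥0∞) ∂μ).toReal with hf
  have htrunc_fin : ∀ (n : ℕ) (x : Ω), (∫⁻ y, min (K x y) (n : ℝ≥0∞) ∂μ) ≠ ⊤ := by
    intro n x
    refine ne_top_of_le_ne_top ?_ (lintegral_mono fun y => min_le_right _ _)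
    simp only [lintegral_const]
    exact ENNReal.mul_ne_top (ENNReal.natCast_ne_top n) (measure_ne_top μ univ)
  have hfc : ∀ n, Continuous (f n) := by
    intro n
    rw [continuous_iff_continuousAt]
    intro x
    exact (ENNReal.tendsto_toReal (htrunc_fin n x)).comp ((pot_trunc_cont hK μ n).tendsto x)
  have hfm : ∀ n, StronglyMeasurable (f n) := fun n => (hfc n).stronglyMeasurable
  have hpm : Measurable (pot K μ) := Measurable.lintegral_prod_right' hK.measurable
  have hgm : StronglyMeasurable g := (ENNReal.measurable_toReal.comp hpm).stronglyMeasurable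
  have htend : ∀ x, Tendsto (fun n => f n x) atTop (𝓝 (g x)) := by
    intro x
    have h1 : Tendsto (fun n : ℕ => ∫⁻ y, min (K x y) (n : ℝ≥0∞) ∂μ) atTop (𝓝 (pot K μ x)) := by
      rw [pot_eq_iSup_trunc hK μ x]
      exact tendsto_atTop_iSup fun i j hij =>
        lintegral_mono fun y => min_le_min le_rfl (Nat.cast_le.2 hij)
    exact (ENNReal.tendsto_toReal (hfin x)).comp h1
  obtain ⟨t, htm, htμ, hunif⟩ :=
    tendstoUniformlyOn_of_ae_tendsto' (μ := μ) hfm hgm (ae_of_all _ htend) hε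
  have hgcont : ContinuousOn g tᶜ :=
    hunif.continuousOn (Eventually.of_forall fun n => (hfc n).continuousOn).frequently
  obtain ⟨C, hCsub, hCcomp, hCμ⟩ :=
    MeasurableSet.exists_isCompact_lt_add htm.compl (measure_ne_top μ _)
      (ε := ENNReal.ofReal ε) (by simp [hε])
  have hCcl : IsClosed C := hCcomp.isClosed
  refine ⟨C, hCcomp, hCcl, hCcl.measurableSet, ?_, ?_⟩
  · have hsub : Cᶜ ⊆ t ∪ (tᶜ \ C) := by
      intro x hx
      by_cases h : x ∈ t
      · exact Or.inl h
      · exact Or.inr ⟨h, hx⟩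
    have hdiff : μ (tᶜ \ C) ≤ ENNReal.ofReal ε := by
      rw [measure_diff hCsub hCcl.measurableSet.nullMeasurableSet (measure_ne_top μ C)]
      exact tsub_le_iff_right.2 ((le_of_lt hCμ).trans (by rw [add_comm]))
    calc μ Cᶜ ≤ μ (t ∪ (tᶜ \ C)) := measure_mono hsub
    _ ≤ μ t + μ (tᶜ \ C) := measure_union_le _ _
    _ ≤ ENNReal.ofReal ε + ENNReal.ofReal ε := add_le_add htμ hdiff
    _ = 2 * ENNReal.ofReal ε := (two_mul _).symm
  · have hgC : ContinuousOn g C := hgcont.mono hCsub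
    have heq : ∀ x, pot K μ x = ENNReal.ofReal (g x) := fun x =>
      (ENNReal.ofReal_toReal (hfin x)).symm
    exact (ENNReal.continuous_ofReal.comp_continuousOn hgC).congr fun x _ => heq x

end Aux

/-- For a regular symmetric extended-continuous kernel `K` and a probability measure `μ`
with everywhere finite potential, there is an increasing sequence of measures `μ_n ≤ μ`
whose potentials are continuous and converge pointwise to the potential of `μ`. -/
theorem exists_increasing_continuous_potentials
    {Ω : Type*} [MetricSpace Ω] [CompactSpace Ω]
    [MeasurableSpace Ω] [BorelSpace Ω]
    (K : Ω → Ω → ℝ≥0∞) (hsym : ∀ x y, K x y = K y x)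
    (hKcont : Continuous (Function.uncurry K)) (hreg : Regular K)
    (μ : Measure Ω) [IsProbabilityMeasure μ]
    (hfin : ∀ x : Ω, pot K μ x ≠ ⊤) :
    ∃ μs : ℕ → Measure Ω, Monotone μs ∧ (∀ n, μs n ≤ μ) ∧
      (∀ n, Continuous (pot K (μs n))) ∧
      ∀ x : Ω, Tendsto (fun n => pot K (μs n) x) atTop (𝓝 (pot K μ x)) := by
  have H : ∀ n : ℕ, ∃ C : Set Ω, IsCompact C ∧ IsClosed C ∧ MeasurableSet C ∧
      μ Cᶜ ≤ 2 * ENNReal.ofReal (1 / (n + 1)) ∧ ContinuousOn (pot K μ) C := fun n =>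
    lusin_pot hKcont μ hfin (by positivity)
  choose C hCcomp hCclosed hCmeas hCmu hCcont using H
  set D : ℕ → Set Ω := Set.accumulate C with hD
  have hDclosed : ∀ n, IsClosed (D n) := by
    intro n
    rw [hD, Set.accumulate_def]
    exact Set.Finite.isClosed_biUnion (Set.finite_Iic n) fun i _ => hCclosed i
  have hDmeas : ∀ n, MeasurableSet (D n) := fun n => (hDclosed n).measurableSet
  have hDcont : ∀ n, ContinuousOn (pot K μ) (D n) := by
    intro n
    induction n with
    | zero =>
      have : D 0 = C 0 := by simp [hD, Set.accumulate_def]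
      rw [this]; exact hCcont 0
    | succ n ih =>
      have : D (n + 1) = D n ∪ C (n + 1) := by
        ext y
        simp only [hD, Set.mem_accumulate, Set.mem_union]
        constructor
        · rintro ⟨k, hk, hy⟩
          rcases eq_or_lt_of_le hk with h | h
          · exact Or.inr (h ▸ hy)
          · exact Or.inl ⟨k, by omega, hy⟩
        · rintro (⟨k, hk, hy⟩ | hy)
          · exact ⟨k, by omega, hy⟩
          · exact ⟨n + 1, le_rfl, hy⟩
      rw [this]
      exact continuousOn_union_closed (hDclosed n) (hCclosed (n + 1)) ih (hCcont (n + 1))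
  set μs : ℕ → Measure Ω := fun n => μ.restrict (D n) with hμs
  have hmono : Monotone μs := fun m n h =>
    Measure.restrict_mono (monotone_accumulate h) le_rfl
  have hle : ∀ n, μs n ≤ μ := fun n => Measure.restrict_le_self
  refine ⟨μs, hmono, hle, ?_, ?_⟩
  · intro n
    have hinst : IsFiniteMeasure (μs n) := by
      rw [hμs]; infer_instance
    refine (hreg (μs n) hinst ?_ ?_).1
    · exact (pot_restrict_continuousOn hKcont μ hfin (hDclosed n) (hDcont n)).mono
        (msupp_restrict_closed (hDclosed n) μ)
    · exact fun x _ => ne_top_of_le_ne_top (hfin x) (pot_mono (hle n) x)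
  · intro x
    have hKxm : Measurable (K x) := (contKy hKcont x).measurable
    have hmono' : Monotone fun n => pot K (μs n) x := fun m n h => pot_mono (hmono h) x
    set U := ⋃ n, D n with hU
    have hUmeas : MeasurableSet U := MeasurableSet.iUnion hDmeas
    have hU0 : μ Uᶜ = 0 := by
      have hsub : ∀ n : ℕ, μ Uᶜ ≤ 2 * ENNReal.ofReal (1 / (n + 1)) := by
        intro n
        refine le_trans (measure_mono (compl_subset_compl.2 ?_)) (hCmu n)
        exact (Set.subset_accumulate).trans (Set.subset_iUnion D n)
      have ht0 : Tendsto (fun n : ℕ => 2 * ENNReal.ofReal (1 / (n + 1))) atTop (𝓝 0) := by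
        have h1 : Tendsto (fun n : ℕ => (1 / (n + 1) : ℝ)) atTop (𝓝 0) :=
          tendsto_one_div_add_atTop_nhds_zero_nat
        have h2 : Tendsto (fun n : ℕ => ENNReal.ofReal (1 / (n + 1))) atTop (𝓝 0) := by
          simpa using ENNReal.tendsto_ofReal h1
        simpa using ENNReal.Tendsto.const_mul h2 (Or.inr (by norm_num))
      exact le_zero_iff.1 (ge_of_tendsto ht0 (Eventually.of_forall hsub))
    have hind : ∀ y, (⨆ n, (D n).indicator (K x) y) = U.indicator (K x) y := by
      intro y
      by_cases hy : y ∈ U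
      · obtain ⟨n, hn⟩ := mem_iUnion.1 hy
        rw [indicator_of_mem hy]
        refine le_antisymm (iSup_le fun m => Set.indicator_le_self _ _ y) ?_
        calc K x y = (D n).indicator (K x) y := (indicator_of_mem hn _).symm
        _ ≤ ⨆ n, (D n).indicator (K x) y := le_iSup (fun n => (D n).indicator (K x) y) n
      · have hy' : ∀ n, y ∉ D n := fun n hn => hy (mem_iUnion.2 ⟨n, hn⟩)
        simp [indicator_of_notMem hy, indicator_of_notMem (hy' _)]
    have hiSup : (⨆ n, pot K (μs n) x) = pot K μ x := by
      calc (⨆ n, pot K (μs n) x) = ⨆ n, ∫⁻ y, (D n).indicator (K x) y ∂μ := by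
            refine iSup_congr fun n => ?_
            rw [hμs, pot, ← lintegral_indicator (hDmeas n)]
      _ = ∫⁻ y, ⨆ n, (D n).indicator (K x) y ∂μ :=
            (lintegral_iSup (fun n => hKxm.indicator (hDmeas n))
              (fun m n h => indicator_le_indicator_of_subset (monotone_accumulate h)
                (fun _ => zero_le))).symm
      _ = ∫⁻ y, U.indicator (K x) y ∂μ := lintegral_congr hind
      _ = ∫⁻ y in U, K x y ∂μ := lintegral_indicator hUmeas _
      _ = pot K μ x := by
            have hdecomp : ∫⁻ y, K x y ∂μ = ∫⁻ y in U, K x y ∂μ + ∫⁻ y in Uᶜ, K x y ∂μ := by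
              rw [← lintegral_add_measure, Measure.restrict_add_restrict_compl hUmeas]
            have hzero : μ.restrict Uᶜ = 0 := by
              rw [Measure.restrict_eq_zero]
              exact hU0
            rw [pot, hdecomp, hzero, lintegral_zero_measure, add_zero]
    exact hiSup ▸ tendsto_atTop_iSup hmono'
end

section
/- On the flat d-torus 𝕋^d, for every s < −2 a Borel probability measure μ minimizes the Riesz energy I_{K_s}(μ) = −∫∫ ρ(x,y)^{-s} dμ(x) dμ(y) if and only if μ = ½(δ_p + δ_q) where q is the unique point of 𝕋^d at distance diam(𝕋^d) from p (the antipodal point in every coordinate). -/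
open MeasureTheory Set ENNReal

noncomputable section

instance : Fact (0 < 2 * Real.pi) := ⟨by positivity⟩

/-- The flat `d`-torus `(ℝ/2πℤ)^d = (𝕊¹)^d`. -/
abbrev Torus (d : ℕ) := Fin d → AddCircle (2 * Real.pi)

/-- The flat (Euclidean quotient) metric on the torus. -/
def tdist {d : ℕ} (x y : Torus d) : ℝ := Real.sqrt (∑ i, dist (x i) (y i) ^ 2)

/-- The Riesz energy for `s < 0`: `I_s(μ) = −∫∫ ρ(x,y)^{-s} dμ dμ`. -/
def negRieszEnergy {d : ℕ} (s : ℝ) (μ : Measure (Torus d)) : ℝ :=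
  -∫ x, ∫ y, tdist x y ^ (-s) ∂μ ∂μ

namespace RieszAux


lemma norm_coe_of_abs_le {x : ℝ} (hx : |x| ≤ Real.pi) :
    ‖((x : ℝ) : AddCircle (2 * Real.pi))‖ = |x| := by
  rw [AddCircle.norm_coe_eq_abs_iff]
  · calc |x| ≤ Real.pi := hx
      _ = |2 * Real.pi| / 2 := by rw [abs_of_pos (by positivity)]; ring
  · positivity

lemma norm_eq_abs_toReal (θ : AddCircle (2 * Real.pi)) : ‖θ‖ = |Real.Angle.toReal θ| := by
  conv_lhs => rw [← Real.Angle.coe_toReal θ]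
  exact norm_coe_of_abs_le (Real.Angle.abs_toReal_le_pi θ)

lemma cos_dist (x y : AddCircle (2 * Real.pi)) : Real.cos (dist x y) = Real.Angle.cos (x - y) := by
  rw [dist_eq_norm, norm_eq_abs_toReal, Real.cos_abs]
  conv_rhs => rw [← Real.Angle.coe_toReal (x - y)]
  rw [Real.Angle.cos_coe]

lemma dist_le_pi (x y : AddCircle (2 * Real.pi)) : dist x y ≤ Real.pi := by
  rw [dist_eq_norm]
  have h := AddCircle.norm_le_half_period (p := 2 * Real.pi) (x := x - y) (by positivity)
  calc ‖x - y‖ ≤ |2 * Real.pi| / 2 := h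
    _ = Real.pi := by rw [abs_of_pos (by positivity)]; ring

lemma dist_add_pi (x : AddCircle (2 * Real.pi)) :
    dist x (x + (Real.pi : AddCircle (2 * Real.pi))) = Real.pi := by
  rw [dist_eq_norm]
  have h : x - (x + (Real.pi : AddCircle (2 * Real.pi)))
      = -(Real.pi : AddCircle (2 * Real.pi)) := by abel
  rw [h, norm_neg]
  have h2 : ((Real.pi : ℝ) : AddCircle (2 * Real.pi))
      = (((2 * Real.pi) / 2 : ℝ) : AddCircle (2 * Real.pi)) := by norm_num
  rw [h2, AddCircle.norm_half_period_eq, abs_of_pos (by positivity)]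
  ring

lemma pi_add_pi : ((Real.pi : ℝ) : AddCircle (2 * Real.pi))
    + ((Real.pi : ℝ) : AddCircle (2 * Real.pi)) = 0 := by
  rw [← AddCircle.coe_add]
  have h : Real.pi + Real.pi = 2 * Real.pi := by ring
  rw [h]
  exact AddCircle.coe_period (2 * Real.pi)

lemma eq_add_pi_of_dist_eq_pi {x y : AddCircle (2 * Real.pi)} (h : dist x y = Real.pi) :
    y = x + (Real.pi : AddCircle (2 * Real.pi)) := by
  rw [dist_eq_norm, norm_eq_abs_toReal] at h
  have h2 : Real.Angle.toReal (x - y) = Real.pi := by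
    rcases abs_eq (le_of_lt Real.pi_pos) |>.mp h with h' | h'
    · exact h'
    · exfalso; have := Real.Angle.neg_pi_lt_toReal (x - y); linarith
  have h3 : (x - y : AddCircle (2 * Real.pi)) = ((Real.pi : ℝ) : AddCircle (2 * Real.pi)) :=
    Real.Angle.toReal_eq_pi_iff.mp h2
  have h4 : x = y + (Real.pi : AddCircle (2 * Real.pi)) := by rw [← h3]; abel
  rw [h4, add_assoc, pi_add_pi, add_zero]

lemma pi_ne_zero' : ((Real.pi : ℝ) : AddCircle (2 * Real.pi)) ≠ 0 :=
  Real.Angle.pi_ne_zero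

/-- Jordan-type inequality: `t² ≤ (π²/2)(1 - cos t)` on `[0, π]`. -/
lemma sq_le_one_sub_cos {t : ℝ} (h0 : 0 ≤ t) (h1 : t ≤ Real.pi) :
    t ^ 2 ≤ Real.pi ^ 2 / 2 * (1 - Real.cos t) := by
  have hs : 2 / Real.pi * (t / 2) ≤ Real.sin (t / 2) :=
    Real.mul_le_sin (by positivity) (by linarith)
  have hπ := Real.pi_pos
  have ht : t ≤ Real.pi * Real.sin (t / 2) := by
    have := mul_le_mul_of_nonneg_left hs (le_of_lt hπ)
    calc t = Real.pi * (2 / Real.pi * (t / 2)) := by field_simp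
      _ ≤ Real.pi * Real.sin (t / 2) := this
  have hsin_nonneg : (0:ℝ) ≤ Real.sin (t / 2) := by
    calc (0:ℝ) ≤ 2 / Real.pi * (t / 2) := by positivity
      _ ≤ _ := hs
  have hsq : t ^ 2 ≤ (Real.pi * Real.sin (t / 2)) ^ 2 := by
    have := mul_self_le_mul_self h0 ht
    simpa [pow_two] using this
  have hcs : Real.cos t = 1 - 2 * Real.sin (t / 2) ^ 2 := by
    have h2 : Real.cos (2 * (t / 2)) = 1 - 2 * Real.sin (t / 2) ^ 2 := by
      rw [Real.cos_two_mul]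
      have := Real.sin_sq_add_cos_sq (t / 2)
      nlinarith
    have h3 : 2 * (t / 2) = t := by ring
    rwa [h3] at h2
  nlinarith [hsq]


/-- the diameter of the torus -/
def diam (d : ℕ) : ℝ := Real.sqrt (d * Real.pi ^ 2)

/-- the antipode -/
def anti {d : ℕ} (x : Torus d) : Torus d :=
  x + fun _ => ((Real.pi : ℝ) : AddCircle (2 * Real.pi))

lemma diam_sq (d : ℕ) : diam d ^ 2 = d * Real.pi ^ 2 :=
  Real.sq_sqrt (by positivity)

lemma diam_nonneg (d : ℕ) : 0 ≤ diam d := Real.sqrt_nonneg _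

lemma diam_pos {d : ℕ} (hd : 1 ≤ d) : 0 < diam d := by
  apply Real.sqrt_pos.mpr
  have : (1:ℝ) ≤ (d:ℝ) := by exact_mod_cast hd
  have := Real.pi_pos
  nlinarith

lemma tdist_nonneg {d : ℕ} (x y : Torus d) : 0 ≤ tdist x y := Real.sqrt_nonneg _

lemma tdist_sq {d : ℕ} (x y : Torus d) : tdist x y ^ 2 = ∑ i, dist (x i) (y i) ^ 2 :=
  Real.sq_sqrt (Finset.sum_nonneg fun i _ => sq_nonneg _)

lemma tdist_comm {d : ℕ} (x y : Torus d) : tdist x y = tdist y x := by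
  unfold tdist; congr 1; exact Finset.sum_congr rfl fun i _ => by rw [dist_comm]

lemma tdist_self {d : ℕ} (x : Torus d) : tdist x x = 0 := by
  unfold tdist; simp

lemma tdist_le_diam {d : ℕ} (x y : Torus d) : tdist x y ≤ diam d := by
  unfold tdist diam
  apply Real.sqrt_le_sqrt
  calc ∑ i, dist (x i) (y i) ^ 2 ≤ ∑ _i : Fin d, Real.pi ^ 2 := by
        apply Finset.sum_le_sum
        intro i _
        have h1 := dist_le_pi (x i) (y i)
        have h2 := dist_nonneg (x := x i) (y := y i)
        nlinarith
    _ = d * Real.pi ^ 2 := by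
        rw [Finset.sum_const, Finset.card_univ, Fintype.card_fin, nsmul_eq_mul]

lemma tdist_anti {d : ℕ} (x : Torus d) : tdist x (anti x) = diam d := by
  unfold tdist diam
  congr 1
  have h : ∀ i : Fin d, dist (x i) (anti x i) = Real.pi := by
    intro i
    show dist (x i) (x i + ((Real.pi : ℝ) : AddCircle (2 * Real.pi))) = Real.pi
    exact dist_add_pi (x i)
  rw [Finset.sum_congr rfl fun i _ => by rw [h i]]
  rw [Finset.sum_const, Finset.card_univ, Fintype.card_fin, nsmul_eq_mul]

lemma eq_of_tdist_eq_zero {d : ℕ} {x y : Torus d} (h : tdist x y = 0) : y = x := by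
  unfold tdist at h
  have h2 : ∑ i, dist (x i) (y i) ^ 2 = 0 := by
    have h' := Real.sqrt_eq_zero'.mp h
    exact le_antisymm h' (Finset.sum_nonneg fun i _ => sq_nonneg _)
  have h3 := (Finset.sum_eq_zero_iff_of_nonneg (fun i _ => sq_nonneg _)).mp h2
  funext i
  have h4 := h3 i (Finset.mem_univ i)
  have h5 : dist (x i) (y i) = 0 := by
    have := sq_eq_zero_iff.mp h4; exact this
  exact (eq_of_dist_eq_zero h5).symm

lemma anti_of_tdist_eq_diam {d : ℕ} {x y : Torus d} (h : tdist x y = diam d) : y = anti x := by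
  have hsq : ∑ i, dist (x i) (y i) ^ 2 = ∑ _i : Fin d, Real.pi ^ 2 := by
    have h1 : tdist x y ^ 2 = diam d ^ 2 := by rw [h]
    rw [tdist_sq] at h1
    rw [h1, diam_sq, Finset.sum_const, Finset.card_univ, Fintype.card_fin, nsmul_eq_mul]
  have hall : ∀ i ∈ Finset.univ, dist (x i) (y i) ^ 2 = Real.pi ^ 2 := by
    have hle : ∀ i ∈ Finset.univ, dist (x i) (y i) ^ 2 ≤ Real.pi ^ 2 := by
      intro i _
      have h1 := dist_le_pi (x i) (y i)
      have h2 := dist_nonneg (x := x i) (y := y i)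
      nlinarith
    intro i hi
    by_contra hne
    have hlt : dist (x i) (y i) ^ 2 < Real.pi ^ 2 := lt_of_le_of_ne (hle i hi) hne
    have : ∑ j, dist (x j) (y j) ^ 2 < ∑ _j : Fin d, Real.pi ^ 2 :=
      Finset.sum_lt_sum hle ⟨i, hi, hlt⟩
    rw [hsq] at this
    exact lt_irrefl _ this
  funext i
  have h4 := hall i (Finset.mem_univ i)
  have h5 : dist (x i) (y i) = Real.pi := by
    have h6 := dist_nonneg (x := x i) (y := y i)
    nlinarith [Real.pi_pos]
  exact eq_add_pi_of_dist_eq_pi h5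

lemma continuous_tdist {d : ℕ} : Continuous (fun z : Torus d × Torus d => tdist z.1 z.2) := by
  unfold tdist
  apply Real.continuous_sqrt.comp
  apply continuous_finset_sum
  intro i _
  exact (Continuous.dist ((continuous_apply i).comp continuous_fst)
    ((continuous_apply i).comp continuous_snd)).pow 2

lemma continuous_rpow_const {r : ℝ} (hr : 0 < r) : Continuous (fun x : ℝ => x ^ r) :=
  continuous_iff_continuousAt.2 fun x => Real.continuousAt_rpow_const x r (Or.inr hr.le)

lemma integrable_of_continuous {X : Type*} [MeasurableSpace X] [TopologicalSpace X]
    [OpensMeasurableSpace X] [CompactSpace X] [T2Space X] (μ : Measure X) [IsFiniteMeasure μ]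
    {f : X → ℝ} (hf : Continuous f) : Integrable f μ := by
  apply hf.integrable_of_hasCompactSupport
  exact IsCompact.of_isClosed_subset isCompact_univ (isClosed_tsupport f) (Set.subset_univ _)


variable {d : ℕ}

lemma rpow_decomp {u : ℝ} (hu : 0 < u) (r : ℝ) : u ^ r = u ^ (r - 2) * u ^ 2 := by
  have h2 : (u : ℝ) ^ (2:ℝ) = u ^ (2:ℕ) := by
    rw [show ((2:ℝ)) = ((2:ℕ):ℝ) by norm_num, Real.rpow_natCast]
  rw [← h2, ← Real.rpow_add hu]
  norm_num

lemma pointwise₁ {r : ℝ} (hr : 2 < r) (x y : Torus d) :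
    tdist x y ^ r ≤ diam d ^ (r - 2) * tdist x y ^ 2 := by
  rcases eq_or_lt_of_le (tdist_nonneg x y) with h | h
  · rw [← h, Real.zero_rpow (ne_of_gt (by linarith : (0:ℝ) < r))]
    exact mul_nonneg (Real.rpow_nonneg (diam_nonneg d) _) (sq_nonneg _)
  · rw [rpow_decomp h r]
    apply mul_le_mul_of_nonneg_right _ (sq_nonneg _)
    exact Real.rpow_le_rpow (le_of_lt h) (tdist_le_diam x y) (by linarith)

lemma pointwise₂ (x y : Torus d) :
    tdist x y ^ 2 ≤ ∑ i, Real.pi ^ 2 / 2 * (1 - Real.Angle.cos (x i - y i)) := by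
  rw [tdist_sq]
  apply Finset.sum_le_sum
  intro i _
  have h := sq_le_one_sub_cos (dist_nonneg (x := x i) (y := y i)) (dist_le_pi (x i) (y i))
  rwa [cos_dist] at h

section EnergyBound

variable (ν : Measure (Torus d)) [IsProbabilityMeasure ν]

lemma cont_f3 {r : ℝ} : Continuous (fun z : Torus d × Torus d =>
    diam d ^ (r - 2) * ∑ i, Real.pi ^ 2 / 2 * (1 - Real.Angle.cos (z.1 i - z.2 i))) := by
  apply continuous_const.mul
  apply continuous_finset_sum
  intro i _
  exact continuous_const.mul (continuous_const.sub
    (Real.Angle.continuous_cos.comp (((continuous_apply i).comp continuous_fst).sub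
      ((continuous_apply i).comp continuous_snd))))

lemma integral_cos_nonneg (i : Fin d) :
    0 ≤ ∫ z : Torus d × Torus d, Real.Angle.cos (z.1 i - z.2 i) ∂(ν.prod ν) := by
  have hc : Continuous (fun x : Torus d => Real.Angle.cos (x i)) :=
    Real.Angle.continuous_cos.comp (continuous_apply i)
  have hsn : Continuous (fun x : Torus d => Real.Angle.sin (x i)) :=
    Real.Angle.continuous_sin.comp (continuous_apply i)
  have hfun : (fun z : Torus d × Torus d => Real.Angle.cos (z.1 i - z.2 i))
      = fun z => Real.Angle.cos (z.1 i) * Real.Angle.cos (z.2 i)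
        + Real.Angle.sin (z.1 i) * Real.Angle.sin (z.2 i) := by
    funext z
    have h := Real.Angle.cos_add (z.1 i) (Neg.neg (α := Real.Angle) (z.2 i))
    rw [Real.Angle.cos_neg (z.2 i), Real.Angle.sin_neg (z.2 i)] at h
    rw [sub_eq_add_neg]
    exact h.trans (by ring)
  rw [hfun]
  have i1 : Integrable (fun z : Torus d × Torus d =>
      Real.Angle.cos (z.1 i) * Real.Angle.cos (z.2 i)) (ν.prod ν) :=
    integrable_of_continuous _ ((hc.comp continuous_fst).mul (hc.comp continuous_snd))
  have i2 : Integrable (fun z : Torus d × Torus d =>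
      Real.Angle.sin (z.1 i) * Real.Angle.sin (z.2 i)) (ν.prod ν) :=
    integrable_of_continuous _ ((hsn.comp continuous_fst).mul (hsn.comp continuous_snd))
  rw [integral_add i1 i2,
    integral_prod_mul (f := fun x : Torus d => Real.Angle.cos (x i))
      (g := fun x : Torus d => Real.Angle.cos (x i)),
    integral_prod_mul (f := fun x : Torus d => Real.Angle.sin (x i))
      (g := fun x : Torus d => Real.Angle.sin (x i))]
  have := sq_nonneg (∫ x, Real.Angle.cos (x i) ∂ν)
  have := sq_nonneg (∫ x, Real.Angle.sin (x i) ∂ν)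
  nlinarith

lemma energy_f2_le (hd : 1 ≤ d) {r : ℝ} (hr : 2 < r) :
    ∫ z : Torus d × Torus d, diam d ^ (r - 2) * tdist z.1 z.2 ^ 2 ∂(ν.prod ν)
      ≤ diam d ^ r / 2 := by
  have hDr2 : (0:ℝ) ≤ diam d ^ (r - 2) := Real.rpow_nonneg (diam_nonneg d) _
  have step1 : ∫ z : Torus d × Torus d, diam d ^ (r - 2) * tdist z.1 z.2 ^ 2 ∂(ν.prod ν)
      ≤ ∫ z : Torus d × Torus d,
        diam d ^ (r - 2) * ∑ i, Real.pi ^ 2 / 2 * (1 - Real.Angle.cos (z.1 i - z.2 i))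
        ∂(ν.prod ν) := by
    apply integral_mono
    · exact integrable_of_continuous _ (continuous_const.mul (continuous_tdist.pow 2))
    · exact integrable_of_continuous _ cont_f3
    · intro z
      exact mul_le_mul_of_nonneg_left (pointwise₂ z.1 z.2) hDr2
  have hgint : ∀ i : Fin d, Integrable (fun z : Torus d × Torus d =>
      Real.pi ^ 2 / 2 * (1 - Real.Angle.cos (z.1 i - z.2 i))) (ν.prod ν) := by
    intro i
    exact integrable_of_continuous _ (continuous_const.mul (continuous_const.sub
      (Real.Angle.continuous_cos.comp (((continuous_apply i).comp continuous_fst).sub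
        ((continuous_apply i).comp continuous_snd)))))
  have step2 : ∫ z : Torus d × Torus d,
      diam d ^ (r - 2) * ∑ i, Real.pi ^ 2 / 2 * (1 - Real.Angle.cos (z.1 i - z.2 i))
      ∂(ν.prod ν) ≤ diam d ^ (r - 2) * (d * (Real.pi ^ 2 / 2)) := by
    rw [integral_const_mul]
    apply mul_le_mul_of_nonneg_left _ hDr2
    rw [integral_finset_sum _ (fun i _ => hgint i)]
    have hle : ∀ i ∈ Finset.univ, (∫ z : Torus d × Torus d,
        Real.pi ^ 2 / 2 * (1 - Real.Angle.cos (z.1 i - z.2 i)) ∂(ν.prod ν))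
        ≤ Real.pi ^ 2 / 2 := by
      intro i _
      rw [integral_const_mul]
      have hint1 : Integrable (fun _ : Torus d × Torus d => (1:ℝ)) (ν.prod ν) :=
        integrable_const 1
      have hint2 : Integrable (fun z : Torus d × Torus d =>
          Real.Angle.cos (z.1 i - z.2 i)) (ν.prod ν) :=
        integrable_of_continuous _ (Real.Angle.continuous_cos.comp
          (((continuous_apply i).comp continuous_fst).sub
            ((continuous_apply i).comp continuous_snd)))
      rw [integral_sub hint1 hint2]
      have h1 : ∫ _ : Torus d × Torus d, (1:ℝ) ∂(ν.prod ν) = 1 := by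
        simp
      rw [h1]
      have h2 := integral_cos_nonneg ν i
      nlinarith [Real.pi_pos]
    calc ∑ i : Fin d, (∫ z : Torus d × Torus d,
          Real.pi ^ 2 / 2 * (1 - Real.Angle.cos (z.1 i - z.2 i)) ∂(ν.prod ν))
        ≤ ∑ _i : Fin d, Real.pi ^ 2 / 2 := Finset.sum_le_sum hle
      _ = d * (Real.pi ^ 2 / 2) := by
          rw [Finset.sum_const, Finset.card_univ, Fintype.card_fin, nsmul_eq_mul]
  have final : diam d ^ (r - 2) * (d * (Real.pi ^ 2 / 2)) = diam d ^ r / 2 := by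
    have hD := diam_pos hd
    have h1 : (d:ℝ) * (Real.pi ^ 2 / 2) = diam d ^ 2 / 2 := by rw [diam_sq]; ring
    rw [h1]
    have h2 : (diam d : ℝ) ^ (2:ℝ) = diam d ^ (2:ℕ) := by
      rw [show ((2:ℝ)) = ((2:ℕ):ℝ) by norm_num, Real.rpow_natCast]
    calc diam d ^ (r - 2) * (diam d ^ 2 / 2)
        = diam d ^ (r - 2) * diam d ^ (2:ℝ) / 2 := by rw [h2]; ring
      _ = diam d ^ (r - 2 + 2) / 2 := by rw [← Real.rpow_add hD]
      _ = diam d ^ r / 2 := by norm_num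
  linarith [step1, step2]

lemma energy_f1_le_f2 (hd : 1 ≤ d) {r : ℝ} (hr : 2 < r) :
    ∫ z : Torus d × Torus d, tdist z.1 z.2 ^ r ∂(ν.prod ν)
      ≤ ∫ z : Torus d × Torus d, diam d ^ (r - 2) * tdist z.1 z.2 ^ 2 ∂(ν.prod ν) := by
  apply integral_mono
  · exact integrable_of_continuous _
      ((continuous_rpow_const (by linarith : (0:ℝ) < r)).comp continuous_tdist)
  · exact integrable_of_continuous _ (continuous_const.mul (continuous_tdist.pow 2))
  · intro z; exact pointwise₁ hr z.1 z.2

lemma iter_eq_prod {r : ℝ} (hr : 0 < r) :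
    ∫ x, ∫ y, tdist x y ^ r ∂ν ∂ν
      = ∫ z : Torus d × Torus d, tdist z.1 z.2 ^ r ∂(ν.prod ν) := by
  have hint : Integrable (Function.uncurry (fun x y : Torus d => tdist x y ^ r)) (ν.prod ν) :=
    integrable_of_continuous _ ((continuous_rpow_const hr).comp continuous_tdist)
  exact integral_integral hint

end EnergyBound

variable {d : ℕ}

lemma isFiniteMeasure_smul_dirac (a : ℝ≥0∞) (ha : a ≠ ⊤) (p : Torus d) :
    IsFiniteMeasure (a • Measure.dirac p) := by
  constructor
  rw [Measure.smul_apply, smul_eq_mul, measure_univ, mul_one]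
  exact ha.lt_top

lemma integral_two_point {a b : ℝ≥0∞} (ha : a ≠ ⊤) (hb : b ≠ ⊤) (p q : Torus d)
    {g : Torus d → ℝ} (hg : Continuous g) :
    ∫ x, g x ∂(a • Measure.dirac p + b • Measure.dirac q)
      = a.toReal * g p + b.toReal * g q := by
  haveI h1 := isFiniteMeasure_smul_dirac a ha p
  haveI h2 := isFiniteMeasure_smul_dirac b hb q
  rw [integral_add_measure (integrable_of_continuous _ hg) (integrable_of_continuous _ hg),
    integral_smul_measure, integral_smul_measure, integral_dirac, integral_dirac,
    smul_eq_mul, smul_eq_mul]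

lemma energy_two_point {r : ℝ} (hr : 0 < r) {a b : ℝ≥0∞} (ha : a ≠ ⊤) (hb : b ≠ ⊤)
    (p q : Torus d) (hpq : tdist p q = diam d) (hqp : tdist q p = diam d) :
    ∫ x, ∫ y, tdist x y ^ r
        ∂(a • Measure.dirac p + b • Measure.dirac q)
        ∂(a • Measure.dirac p + b • Measure.dirac q)
      = 2 * a.toReal * b.toReal * diam d ^ r := by
  have hcont : ∀ x : Torus d, Continuous (fun y => tdist x y ^ r) := by
    intro x
    exact (continuous_tdist.comp (Continuous.prodMk_right x)).rpow_const
      (fun y => Or.inr hr.le)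
  have hin : (fun x => ∫ y, tdist x y ^ r ∂(a • Measure.dirac p + b • Measure.dirac q))
      = fun x => a.toReal * tdist x p ^ r + b.toReal * tdist x q ^ r :=
    funext fun x => integral_two_point ha hb p q (hcont x)
  rw [hin]
  have hcont2 : Continuous (fun x : Torus d =>
      a.toReal * tdist x p ^ r + b.toReal * tdist x q ^ r) := by
    have hc : ∀ w : Torus d, Continuous (fun x : Torus d => tdist x w ^ r) := by
      intro w
      exact (continuous_tdist.comp (continuous_id.prodMk continuous_const)).rpow_const
        (fun x => Or.inr hr.le)
    exact (continuous_const.mul (hc p)).add (continuous_const.mul (hc q))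
  rw [integral_two_point ha hb p q hcont2]
  rw [tdist_self p, tdist_self q, hpq, hqp, Real.zero_rpow (ne_of_gt hr)]
  ring

lemma isProbabilityMeasure_two_point (p q : Torus d) :
    IsProbabilityMeasure ((2⁻¹ : ℝ≥0∞) • (Measure.dirac p + Measure.dirac q)) := by
  constructor
  rw [Measure.smul_apply, Measure.add_apply, smul_eq_mul]
  rw [measure_univ, measure_univ]
  norm_num
  exact ENNReal.inv_mul_cancel (by norm_num) (by norm_num)



variable {d : ℕ}

lemma continuous_anti : Continuous (anti : Torus d → Torus d) :=
  continuous_id.add continuous_const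

lemma anti_ne (hd : 1 ≤ d) (x : Torus d) : anti x ≠ x := by
  intro h
  have h2 : anti x ⟨0, hd⟩ = x ⟨0, hd⟩ := by rw [h]
  have h3 : x ⟨0, hd⟩ + ((Real.pi : ℝ) : AddCircle (2 * Real.pi)) = x ⟨0, hd⟩ := h2
  exact pi_ne_zero' (by simpa using h3)

lemma measurableSet_G1 : MeasurableSet {z : Torus d × Torus d | z.2 = z.1} :=
  (isClosed_eq continuous_snd continuous_fst).measurableSet

lemma measurableSet_G2 : MeasurableSet {z : Torus d × Torus d | z.2 = anti z.1} :=
  (isClosed_eq continuous_snd (continuous_anti.comp continuous_fst)).measurableSet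

lemma exists_conc (hd : 1 ≤ d) (μ : Measure (Torus d)) [IsProbabilityMeasure μ]
    (hG : μ.prod μ {z : Torus d × Torus d | ¬(z.2 = z.1 ∨ z.2 = anti z.1)} = 0) :
    ∃ p : Torus d, μ {p} + μ {anti p} = 1 := by
  set G1 : Set (Torus d × Torus d) := {z | z.2 = z.1} with hG1def
  set G2 : Set (Torus d × Torus d) := {z | z.2 = anti z.1} with hG2def
  have hcompl : {z : Torus d × Torus d | ¬(z.2 = z.1 ∨ z.2 = anti z.1)} = (G1 ∪ G2)ᶜ := by
    ext z; simp [hG1def, hG2def]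
  rw [hcompl] at hG
  have hGun : μ.prod μ (G1 ∪ G2) = 1 :=
    (prob_compl_eq_zero_iff (measurableSet_G1.union measurableSet_G2)).mp hG
  have hPG1 : μ.prod μ G1 = ∫⁻ x, μ {x} ∂μ := by
    rw [Measure.prod_apply measurableSet_G1]
    rfl
  have hPG2 : μ.prod μ G2 = ∫⁻ x, μ {anti x} ∂μ := by
    rw [Measure.prod_apply measurableSet_G2]
    rfl
  have hm1 : Measurable (fun x : Torus d => μ {x}) :=
    measurable_measure_prodMk_left measurableSet_G1
  have hm2 : Measurable (fun x : Torus d => μ {anti x}) :=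
    measurable_measure_prodMk_left measurableSet_G2
  set g : Torus d → ℝ≥0∞ := fun x => μ {x} + μ {anti x} with hgdef
  have hgm : Measurable g := hm1.add hm2
  have hgle : ∀ x, g x ≤ 1 := by
    intro x
    have hdisj : Disjoint ({x} : Set (Torus d)) {anti x} :=
      Set.disjoint_singleton.mpr (Ne.symm (anti_ne hd x))
    have := measure_union (μ := μ) hdisj (measurableSet_singleton (anti x))
    rw [hgdef]
    simp only
    rw [← this]
    exact prob_le_one
  have hge : 1 ≤ ∫⁻ x, g x ∂μ := by
    calc (1:ℝ≥0∞) = μ.prod μ (G1 ∪ G2) := hGun.symm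
      _ ≤ μ.prod μ G1 + μ.prod μ G2 := measure_union_le _ _
      _ = ∫⁻ x, μ {x} ∂μ + ∫⁻ x, μ {anti x} ∂μ := by rw [hPG1, hPG2]
      _ = ∫⁻ x, g x ∂μ := (lintegral_add_left hm1 _).symm
  have hle : ∫⁻ x, g x ∂μ ≤ 1 := by
    calc ∫⁻ x, g x ∂μ ≤ ∫⁻ _, 1 ∂μ := lintegral_mono hgle
      _ = 1 := by simp
  have hint : ∫⁻ x, g x ∂μ = 1 := le_antisymm hle hge
  have hsub : ∫⁻ x, (1 - g x) ∂μ = 0 := by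
    rw [lintegral_sub hgm (by rw [hint]; exact one_ne_top) (Filter.Eventually.of_forall hgle)]
    rw [hint]
    simp
  have hae : (fun x => 1 - g x) =ᵐ[μ] 0 :=
    (lintegral_eq_zero_iff (measurable_const.sub hgm)).mp hsub
  haveI : (ae μ).NeBot := ae_neBot.mpr (IsProbabilityMeasure.ne_zero μ)
  obtain ⟨p, hp⟩ := hae.exists
  refine ⟨p, ?_⟩
  have hp2 : (1:ℝ≥0∞) - g p = 0 := hp
  exact le_antisymm (hgle p) (tsub_eq_zero_iff_le.mp hp2)

lemma two_point_decomp {μ : Measure (Torus d)} [IsProbabilityMeasure μ]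
    {p q : Torus d} (hpq : q ≠ p) (h : μ {p} + μ {q} = 1) :
    μ = μ {p} • Measure.dirac p + μ {q} • Measure.dirac q := by
  have hmeas : MeasurableSet ({p, q} : Set (Torus d)) :=
    (measurableSet_singleton q).insert p
  have hunion : μ ({p, q} : Set (Torus d)) = 1 := by
    have hdisj : Disjoint ({p} : Set (Torus d)) {q} := by
      simp [Set.disjoint_singleton, hpq.symm]
    have : ({p, q} : Set (Torus d)) = {p} ∪ {q} := by rfl
    rw [this, measure_union hdisj (measurableSet_singleton q), h]
  have hcompl : μ (({p, q} : Set (Torus d))ᶜ) = 0 := by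
    rw [measure_compl hmeas (measure_ne_top μ _), hunion, measure_univ, tsub_self]
  ext s hs
  have hsplit : μ s = μ (s ∩ {p, q}) + μ (s \ {p, q}) := (measure_inter_add_diff s hmeas).symm
  have hdiff : μ (s \ {p, q}) = 0 :=
    measure_mono_null (Set.diff_subset_compl s _) hcompl
  rw [hsplit, hdiff, add_zero]
  rw [Measure.add_apply, Measure.smul_apply, Measure.smul_apply,
    Measure.dirac_apply' _ hs, Measure.dirac_apply' _ hs, smul_eq_mul, smul_eq_mul]
  by_cases hp : p ∈ s <;> by_cases hq : q ∈ s
  · have : s ∩ {p, q} = {p, q} := Set.inter_eq_self_of_subset_right (by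
      intro y hy; rcases hy with h | h <;> (subst h; assumption))
    rw [this, hunion, Set.indicator_of_mem hp, Set.indicator_of_mem hq]
    simp [h]
  · have : s ∩ {p, q} = {p} := by
      ext y
      constructor
      · rintro ⟨hys, hy⟩
        rcases hy with h' | h'
        · exact h'
        · exfalso; rw [Set.mem_singleton_iff] at h'; subst h'; exact hq hys
      · rintro rfl; exact ⟨hp, Or.inl rfl⟩
    rw [this, Set.indicator_of_mem hp, Set.indicator_of_notMem hq]
    simp
  · have : s ∩ {p, q} = {q} := by
      ext y
      constructor
      · rintro ⟨hys, hy⟩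
        rcases hy with h' | h'
        · exfalso; subst h'; exact hp hys
        · exact h'
      · rintro rfl; exact ⟨hq, Or.inr rfl⟩
    rw [this, Set.indicator_of_notMem hp, Set.indicator_of_mem hq]
    simp
  · have : s ∩ {p, q} = ∅ := by
      ext y
      simp only [Set.mem_inter_iff, Set.mem_empty_iff_false, iff_false]
      rintro ⟨hys, hy⟩
      rcases hy with h' | h'
      · subst h'; exact hp hys
      · rw [Set.mem_singleton_iff] at h'; subst h'; exact hq hys
    rw [this, Set.indicator_of_notMem hp, Set.indicator_of_notMem hq]
    simp


end RieszAux

namespace RieszAux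

variable {d : ℕ}

lemma energy_le_half (hd : 1 ≤ d) {r : ℝ} (hr : 2 < r) (ν : Measure (Torus d))
    [IsProbabilityMeasure ν] :
    ∫ z : Torus d × Torus d, tdist z.1 z.2 ^ r ∂(ν.prod ν) ≤ diam d ^ r / 2 :=
  le_trans (energy_f1_le_f2 ν hd hr) (energy_f2_le ν hd hr)

lemma energy_candidate {r : ℝ} (hr : 0 < r) (p : Torus d) :
    ∫ x, ∫ y, tdist x y ^ r
        ∂((2⁻¹ : ℝ≥0∞) • (Measure.dirac p + Measure.dirac (anti p)))
        ∂((2⁻¹ : ℝ≥0∞) • (Measure.dirac p + Measure.dirac (anti p)))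
      = diam d ^ r / 2 := by
  have hsm : ((2⁻¹ : ℝ≥0∞) • (Measure.dirac p + Measure.dirac (anti p)))
      = (2⁻¹ : ℝ≥0∞) • Measure.dirac p + (2⁻¹ : ℝ≥0∞) • Measure.dirac (anti p) :=
    smul_add _ _ _
  rw [hsm, energy_two_point hr (by simp) (by simp) p (anti p) (tdist_anti p)
    (by rw [tdist_comm]; exact tdist_anti p)]
  have h : (2⁻¹ : ℝ≥0∞).toReal = 1 / 2 := by simp
  rw [h]; ring

end RieszAux

open RieszAux in
set_option maxHeartbeats 1000000 in
/-- On the flat `d`-torus, for every `s < −2` a probability measure minimizes the Riesz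
`s`-energy iff it is the average of two Dirac masses at a point `p` and the unique point
at diameter distance from `p` (the point antipodal to `p` in every coordinate). -/
theorem riesz_lt_neg_two_minimizers_on_torus
    (d : ℕ) (hd : 1 ≤ d) (s : ℝ) (hs : s < -2)
    (μ : Measure (Torus d)) [IsProbabilityMeasure μ] :
    (∀ ν : Measure (Torus d), IsProbabilityMeasure ν →
        negRieszEnergy s μ ≤ negRieszEnergy s ν) ↔
      (∃ p : Torus d,
        μ = (2⁻¹ : ℝ≥0∞) • (Measure.dirac p +
          Measure.dirac (p + fun _ => (Real.pi : AddCircle (2 * Real.pi))))) := by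
  have hr2 : (2:ℝ) < -s := by linarith
  have hr0 : (0:ℝ) < -s := by linarith
  have if1 : Integrable (fun z : Torus d × Torus d => tdist z.1 z.2 ^ (-s)) (μ.prod μ) :=
    integrable_of_continuous _ (continuous_tdist.rpow_const (fun z => Or.inr hr0.le))
  have if2 : Integrable (fun z : Torus d × Torus d =>
      diam d ^ (-s - 2) * tdist z.1 z.2 ^ 2) (μ.prod μ) :=
    integrable_of_continuous _ (continuous_const.mul (continuous_tdist.pow 2))
  constructor
  · intro hmin
    -- lower bound on the energy of μ from the candidate measure
    set p₀ : Torus d := fun _ => 0 with hp₀def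
    have hTge : diam d ^ (-s) / 2 ≤
        ∫ z : Torus d × Torus d, tdist z.1 z.2 ^ (-s) ∂(μ.prod μ) := by
      have h := hmin _ (isProbabilityMeasure_two_point p₀ (anti p₀))
      unfold negRieszEnergy at h
      rw [energy_candidate hr0 p₀] at h
      rw [iter_eq_prod μ hr0] at h
      linarith
    have hTle := energy_le_half hd hr2 μ
    have hT : ∫ z : Torus d × Torus d, tdist z.1 z.2 ^ (-s) ∂(μ.prod μ)
        = diam d ^ (-s) / 2 := le_antisymm hTle hTge
    have hf2 : ∫ z : Torus d × Torus d,
        diam d ^ (-s - 2) * tdist z.1 z.2 ^ 2 ∂(μ.prod μ) = diam d ^ (-s) / 2 :=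
      le_antisymm (energy_f2_le μ hd hr2) (hT ▸ energy_f1_le_f2 μ hd hr2)
    have hzero : ∫ z : Torus d × Torus d,
        (diam d ^ (-s - 2) * tdist z.1 z.2 ^ 2 - tdist z.1 z.2 ^ (-s)) ∂(μ.prod μ) = 0 := by
      rw [integral_sub if2 if1, hT, hf2]
      ring
    have hint : Integrable (fun z : Torus d × Torus d =>
        diam d ^ (-s - 2) * tdist z.1 z.2 ^ 2 - tdist z.1 z.2 ^ (-s)) (μ.prod μ) :=
      if2.sub if1
    have hnn : 0 ≤ᵐ[μ.prod μ] (fun z : Torus d × Torus d =>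
        diam d ^ (-s - 2) * tdist z.1 z.2 ^ 2 - tdist z.1 z.2 ^ (-s)) :=
      Filter.Eventually.of_forall (fun z => sub_nonneg.2 (pointwise₁ hr2 z.1 z.2))
    have hae : (fun z : Torus d × Torus d =>
        diam d ^ (-s - 2) * tdist z.1 z.2 ^ 2 - tdist z.1 z.2 ^ (-s)) =ᵐ[μ.prod μ] 0 :=
      (integral_eq_zero_iff_of_nonneg_ae hnn hint).mp hzero
    have hnull : μ.prod μ {z : Torus d × Torus d |
        diam d ^ (-s - 2) * tdist z.1 z.2 ^ 2 - tdist z.1 z.2 ^ (-s) ≠ 0} = 0 := by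
      have := ae_iff.mp hae
      simpa using this
    have hsubset : {z : Torus d × Torus d | ¬(z.2 = z.1 ∨ z.2 = anti z.1)} ⊆
        {z : Torus d × Torus d |
          diam d ^ (-s - 2) * tdist z.1 z.2 ^ 2 - tdist z.1 z.2 ^ (-s) ≠ 0} := by
      intro z hz
      simp only [Set.mem_setOf_eq, not_or] at hz
      obtain ⟨h1, h2⟩ := hz
      have hu0 : tdist z.1 z.2 ≠ 0 := fun h => h1 (eq_of_tdist_eq_zero h)
      have huD : tdist z.1 z.2 ≠ diam d := fun h => h2 (anti_of_tdist_eq_diam h)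
      have hupos : 0 < tdist z.1 z.2 :=
        lt_of_le_of_ne (tdist_nonneg z.1 z.2) (Ne.symm hu0)
      have hultD : tdist z.1 z.2 < diam d :=
        lt_of_le_of_ne (tdist_le_diam z.1 z.2) huD
      have hlt : tdist z.1 z.2 ^ (-s) < diam d ^ (-s - 2) * tdist z.1 z.2 ^ 2 := by
        rw [rpow_decomp hupos (-s)]
        exact mul_lt_mul_of_pos_right
          (Real.rpow_lt_rpow hupos.le hultD (by linarith)) (pow_pos hupos 2)
      exact ne_of_gt (sub_pos.2 hlt)
    have hGnull : μ.prod μ {z : Torus d × Torus d | ¬(z.2 = z.1 ∨ z.2 = anti z.1)} = 0 :=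
      measure_mono_null hsubset hnull
    obtain ⟨p, hp⟩ := exists_conc hd μ hGnull
    have hdec := two_point_decomp (anti_ne hd p) hp
    have ha : μ {p} ≠ ⊤ := measure_ne_top μ _
    have hb : μ {anti p} ≠ ⊤ := measure_ne_top μ _
    have henergy : ∫ x, ∫ y, tdist x y ^ (-s) ∂μ ∂μ
        = 2 * (μ {p}).toReal * (μ {anti p}).toReal * diam d ^ (-s) := by
      conv_lhs => rw [hdec]
      exact energy_two_point hr0 ha hb p (anti p) (tdist_anti p)
        (by rw [tdist_comm]; exact tdist_anti p)
    have henergy2 : ∫ x, ∫ y, tdist x y ^ (-s) ∂μ ∂μ = diam d ^ (-s) / 2 := by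
      rw [iter_eq_prod μ hr0, hT]
    have hDpos : 0 < diam d ^ (-s) := Real.rpow_pos_of_pos (diam_pos hd) _
    have hab : 2 * (μ {p}).toReal * (μ {anti p}).toReal = 1 / 2 := by
      have h := henergy.symm.trans henergy2
      have h2 := mul_right_cancel₀ (ne_of_gt hDpos)
        (by rw [h]; ring :
          2 * (μ {p}).toReal * (μ {anti p}).toReal * diam d ^ (-s)
            = 1 / 2 * diam d ^ (-s))
      exact h2
    have hsum : (μ {p}).toReal + (μ {anti p}).toReal = 1 := by
      rw [← ENNReal.toReal_add ha hb, hp]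
      simp
    have hahalf : (μ {p}).toReal = 1 / 2 := by
      nlinarith [sq_nonneg ((μ {p}).toReal - (μ {anti p}).toReal)]
    have hbhalf : (μ {anti p}).toReal = 1 / 2 := by linarith
    have haval : μ {p} = (2⁻¹ : ℝ≥0∞) := by
      refine (ENNReal.toReal_eq_toReal_iff' ha (by simp)).mp ?_
      rw [hahalf]
      simp
    have hbval : μ {anti p} = (2⁻¹ : ℝ≥0∞) := by
      refine (ENNReal.toReal_eq_toReal_iff' hb (by simp)).mp ?_
      rw [hbhalf]
      simp
    refine ⟨p, ?_⟩
    rw [hdec, haval, hbval, ← smul_add]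
    rfl
  · rintro ⟨p, rfl⟩ ν hν
    unfold negRieszEnergy
    have h1 : ∫ x, ∫ y, tdist x y ^ (-s)
        ∂((2⁻¹ : ℝ≥0∞) • (Measure.dirac p + Measure.dirac (anti p)))
        ∂((2⁻¹ : ℝ≥0∞) • (Measure.dirac p + Measure.dirac (anti p)))
        = diam d ^ (-s) / 2 := energy_candidate hr0 p
    have h2 : ∫ x, ∫ y, tdist x y ^ (-s) ∂ν ∂ν ≤ diam d ^ (-s) / 2 := by
      rw [iter_eq_prod ν hr0]
      exact energy_le_half hd hr2 ν
    have h3 : ∫ x, ∫ y, tdist x y ^ (-s)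
        ∂((2⁻¹ : ℝ≥0∞) • (Measure.dirac p + Measure.dirac
          (p + fun _ => (Real.pi : AddCircle (2 * Real.pi)))))
        ∂((2⁻¹ : ℝ≥0∞) • (Measure.dirac p + Measure.dirac
          (p + fun _ => (Real.pi : AddCircle (2 * Real.pi)))))
        = diam d ^ (-s) / 2 := h1
    rw [h3]
    linarith


end
end
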